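/- arXiv:1610.00240 — 2 statements merged into one kernel-verified Lean document; each statement's English description precedes it below -/
import Mathlib

section
/- Let ρ : ℝ³ → ℝ and u : ℝ³ → ℝ³ be twice continuously differentiable, let ω = ∇×u, and assume that for every x ∈ ℝ³ with x₃ = 0 one has u₃(x) = 0, ω₁(x) = 0 and ω₂(x) = 0. Then for every x with x₃ = 0 and for j = 1, 2, one has ρ(x) · (Σᵢ uᵢ(x) ∂ᵢω_j(x) − Σᵢ ωᵢ(x) ∂ᵢu_j(x)) = 0; that is, ρ(u·∇ω − ω·∇u) × n = 0 on the flat boundary. -/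
open scoped BigOperators

/-- Spatial partial derivative `∂ᵢ f` of a scalar function on `ℝ³`. -/
noncomputable def pd (i : Fin 3) (f : (Fin 3 → ℝ) → ℝ) (x : Fin 3 → ℝ) : ℝ :=
  fderiv ℝ f x (Pi.single i 1)

/-- The curl `∇ × u` of a vector field on `ℝ³`. -/
noncomputable def curl (u : (Fin 3 → ℝ) → Fin 3 → ℝ) (x : Fin 3 → ℝ) : Fin 3 → ℝ :=
  ![pd 1 (fun y => u y 2) x - pd 2 (fun y => u y 1) x,
    pd 2 (fun y => u y 0) x - pd 0 (fun y => u y 2) x,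
    pd 0 (fun y => u y 1) x - pd 1 (fun y => u y 0) x]

lemma pd_tangential_zero {f : (Fin 3 → ℝ) → ℝ} {x : Fin 3 → ℝ}
    (hf : DifferentiableAt ℝ f x) {i : Fin 3} (hi : i ≠ 2)
    (h0 : ∀ y : Fin 3 → ℝ, y 2 = 0 → f y = 0) (hx : x 2 = 0) :
    pd i f x = 0 := by
  have hg : ∀ t : ℝ, HasDerivAt (fun t : ℝ => x + t • (Pi.single i 1 : Fin 3 → ℝ))
      ((Pi.single i 1 : Fin 3 → ℝ)) t := by
    intro t
    simpa using ((hasDerivAt_id t).smul_const ((Pi.single i 1 : Fin 3 → ℝ))).const_add x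
  have hcomp : HasDerivAt (fun t : ℝ => f (x + t • (Pi.single i 1 : Fin 3 → ℝ)))
      (fderiv ℝ f x ((Pi.single i 1 : Fin 3 → ℝ))) 0 := by
    have := HasFDerivAt.comp_hasDerivAt_of_eq (0:ℝ) hf.hasFDerivAt (hg 0) (by simp)
    exact this
  have hzero : (fun t : ℝ => f (x + t • (Pi.single i 1 : Fin 3 → ℝ))) = fun _ => 0 := by
    funext t
    apply h0
    have : (Pi.single i 1 : Fin 3 → ℝ) 2 = 0 := Pi.single_eq_of_ne (Ne.symm hi) 1
    simp [this, hx]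
  rw [hzero] at hcomp
  have := (hasDerivAt_const (0:ℝ) (0:ℝ)).unique hcomp
  simpa [pd] using this.symm

lemma contDiff_comp_proj {u : (Fin 3 → ℝ) → Fin 3 → ℝ} (hu : ContDiff ℝ 2 u) (k : Fin 3) :
    ContDiff ℝ 2 (fun y => u y k) :=
  (ContinuousLinearMap.proj (R := ℝ) (φ := fun _ : Fin 3 => ℝ) k).contDiff.comp hu

lemma contDiff_pd {u : (Fin 3 → ℝ) → Fin 3 → ℝ} (hu : ContDiff ℝ 2 u) (j k : Fin 3) :
    ContDiff ℝ 1 (fun y => pd j (fun z => u z k) y) := by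
  have h1 : ContDiff ℝ 1 (fderiv ℝ (fun z => u z k)) :=
    (contDiff_comp_proj hu k).fderiv_right (by norm_num)
  exact h1.clm_apply contDiff_const

/-- Under the slip boundary conditions `u₃ = 0`, `ω₁ = ω₂ = 0` on the flat
boundary `{x₃ = 0}`, the tangential components of `ρ(u·∇ω − ω·∇u)` vanish on
the boundary, i.e. `ρ(u·∇ω − ω·∇u) × n = 0` there (Proposition 2.2). -/
theorem tangential_vorticity_transport_vanishes
    (ρ : (Fin 3 → ℝ) → ℝ) (u : (Fin 3 → ℝ) → Fin 3 → ℝ)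
    (hρ : ContDiff ℝ 2 ρ) (hu : ContDiff ℝ 2 u)
    (hbc : ∀ x : Fin 3 → ℝ, x 2 = 0 →
      u x 2 = 0 ∧ curl u x 0 = 0 ∧ curl u x 1 = 0) :
    ∀ x : Fin 3 → ℝ, x 2 = 0 →
      (ρ x * ((∑ i : Fin 3, u x i * pd i (fun y => curl u y 0) x)
          - ∑ i : Fin 3, curl u x i * pd i (fun y => u y 0) x) = 0)
      ∧ (ρ x * ((∑ i : Fin 3, u x i * pd i (fun y => curl u y 1) x)
          - ∑ i : Fin 3, curl u x i * pd i (fun y => u y 1) x) = 0) := by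
  intro x hx
  obtain ⟨hu3, hw0, hw1⟩ := hbc x hx
  -- curl components as explicit differences
  have hc0 : (fun y => curl u y 0) =
      fun y => pd 1 (fun z => u z 2) y - pd 2 (fun z => u z 1) y := by
    funext y; simp [curl]
  have hc1 : (fun y => curl u y 1) =
      fun y => pd 2 (fun z => u z 0) y - pd 0 (fun z => u z 2) y := by
    funext y; simp [curl]
  -- differentiability
  have hdu : ∀ k : Fin 3, DifferentiableAt ℝ (fun y => u y k) x := fun k =>
    ((contDiff_comp_proj hu k).differentiable (by norm_num)).differentiableAt
  have hdc0 : DifferentiableAt ℝ (fun y => curl u y 0) x := by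
    rw [hc0]
    exact (((contDiff_pd hu 1 2).differentiable one_ne_zero).differentiableAt).sub
      (((contDiff_pd hu 2 1).differentiable one_ne_zero).differentiableAt)
  have hdc1 : DifferentiableAt ℝ (fun y => curl u y 1) x := by
    rw [hc1]
    exact (((contDiff_pd hu 2 0).differentiable one_ne_zero).differentiableAt).sub
      (((contDiff_pd hu 0 2).differentiable one_ne_zero).differentiableAt)
  -- tangential derivatives of boundary-vanishing functions
  have hu2bc : ∀ y : Fin 3 → ℝ, y 2 = 0 → (fun z => u z 2) y = 0 := fun y hy => (hbc y hy).1
  have hc0bc : ∀ y : Fin 3 → ℝ, y 2 = 0 → (fun z => curl u z 0) y = 0 :=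
    fun y hy => (hbc y hy).2.1
  have hc1bc : ∀ y : Fin 3 → ℝ, y 2 = 0 → (fun z => curl u z 1) y = 0 :=
    fun y hy => (hbc y hy).2.2
  have h02 : (0 : Fin 3) ≠ 2 := by decide
  have h12 : (1 : Fin 3) ≠ 2 := by decide
  have hp0c0 : pd 0 (fun y => curl u y 0) x = 0 := pd_tangential_zero hdc0 h02 hc0bc hx
  have hp1c0 : pd 1 (fun y => curl u y 0) x = 0 := pd_tangential_zero hdc0 h12 hc0bc hx
  have hp0c1 : pd 0 (fun y => curl u y 1) x = 0 := pd_tangential_zero hdc1 h02 hc1bc hx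
  have hp1c1 : pd 1 (fun y => curl u y 1) x = 0 := pd_tangential_zero hdc1 h12 hc1bc hx
  have hp0u2 : pd 0 (fun y => u y 2) x = 0 := pd_tangential_zero (hdu 2) h02 hu2bc hx
  have hp1u2 : pd 1 (fun y => u y 2) x = 0 := pd_tangential_zero (hdu 2) h12 hu2bc hx
  -- normal derivatives of tangential velocity vanish via curl conditions
  have hcurl0x : curl u x 0 = pd 1 (fun y => u y 2) x - pd 2 (fun y => u y 1) x := by
    simp [curl]
  have hcurl1x : curl u x 1 = pd 2 (fun y => u y 0) x - pd 0 (fun y => u y 2) x := by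
    simp [curl]
  have hp2u1 : pd 2 (fun y => u y 1) x = 0 := by
    have := hw0; rw [hcurl0x, hp1u2] at this; linarith
  have hp2u0 : pd 2 (fun y => u y 0) x = 0 := by
    have := hw1; rw [hcurl1x, hp0u2] at this; linarith
  constructor
  · rw [Fin.sum_univ_three, Fin.sum_univ_three, hu3, hw0, hw1, hp0c0, hp1c0, hp2u0]
    ring
  · rw [Fin.sum_univ_three, Fin.sum_univ_three, hu3, hw0, hw1, hp0c1, hp1c1, hp2u1]
    ring
end

section
/- Let u : ℝ × ℝ³ → ℝ³ be a continuously differentiable vector field which is bounded and has bounded spatial derivatives, and assume that for every t ≥ 0 and every x with x₃ = 0 one has u₃(t,x) = 0, ∂₃u₁(t,x) = 0 and ∂₃u₂(t,x) = 0. Let ρ : ℝ × ℝ³ → ℝ be twice continuously differentiable with bounded derivatives, solving the transport equation ∂ₜρ + u·∇ρ = 0 at every point. If ∂₃ρ(0,x) = 0 for every x with x₃ = 0, then ∂₃ρ(t,x) = 0 for every t ≥ 0 and every x with x₃ = 0; that is, ∇ρ·n = 0 on the flat boundary is preserved in time. -/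
open scoped BigOperators

/-- Time derivative `∂ₜ f` of a scalar function on `ℝ × ℝ³`. -/
noncomputable def pt (f : ℝ × (Fin 3 → ℝ) → ℝ) (p : ℝ × (Fin 3 → ℝ)) : ℝ :=
  fderiv ℝ f p (1, 0)

/-- Spatial partial derivative `∂ᵢ f` of a scalar function on `ℝ × ℝ³`. -/
noncomputable def pdx (i : Fin 3) (f : ℝ × (Fin 3 → ℝ) → ℝ) (p : ℝ × (Fin 3 → ℝ)) : ℝ :=
  fderiv ℝ f p (0, Pi.single i 1)

abbrev E3 := Fin 3 → ℝ
abbrev P3 := ℝ × E3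

/-- directional derivative along a line -/
lemma dirDeriv {f : P3 → ℝ} {p : P3} (hf : DifferentiableAt ℝ f p) (w : P3) :
    HasDerivAt (fun s : ℝ => f (p + s • w)) (fderiv ℝ f p w) 0 := by
  have hl : HasDerivAt (fun s : ℝ => p + s • w) w 0 := by
    simpa using ((hasDerivAt_id (0 : ℝ)).smul_const w).const_add p
  have hf' : HasFDerivAt f (fderiv ℝ f p) (p + (0:ℝ) • w) := by
    simpa using hf.hasFDerivAt
  exact hf'.comp_hasDerivAt 0 hl

/-- apply-vector version of second derivative -/
lemma fderiv_fderiv_apply {ρ : P3 → ℝ} (hρ : ContDiff ℝ 2 ρ) (p : P3) (v w : P3) :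
    fderiv ℝ (fun q => fderiv ℝ ρ q v) p w = fderiv ℝ (fderiv ℝ ρ) p w v := by
  have hd : DifferentiableAt ℝ (fderiv ℝ ρ) p :=
    (hρ.fderiv_right (m := 1) (by norm_num)).differentiable one_ne_zero p
  have h := hd.hasFDerivAt.clm_apply (hasFDerivAt_const v p)
  have := h.fderiv
  rw [this]
  simp

lemma differentiable_fderiv_apply {ρ : P3 → ℝ} (hρ : ContDiff ℝ 2 ρ) (v : P3) :
    Differentiable ℝ (fun q => fderiv ℝ ρ q v) := by
  intro p
  have hd : DifferentiableAt ℝ (fderiv ℝ ρ) p :=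
    (hρ.fderiv_right (m := 1) (by norm_num)).differentiable one_ne_zero p
  exact hd.clm_apply (differentiableAt_const v)

/-- symmetry of second derivative -/
lemma sndDeriv_symm {ρ : P3 → ℝ} (hρ : ContDiff ℝ 2 ρ) (p : P3) (v w : P3) :
    fderiv ℝ (fderiv ℝ ρ) p v w = fderiv ℝ (fderiv ℝ ρ) p w v :=
  (hρ.contDiffAt.isSymmSndFDerivAt (by norm_num)) v w

lemma pi3_decomp (w : E3) : w = ∑ j : Fin 3, w j • (Pi.single j 1 : E3) := by
  funext k
  simp [Finset.sum_apply, Pi.single_apply]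

lemma fderiv_pi_apply {u : P3 → E3} (hu : DifferentiableAt ℝ u p) (i : Fin 3) (z : P3) :
    fderiv ℝ (fun q => u q i) p z = fderiv ℝ u p z i := by
  have h := ((ContinuousLinearMap.proj (R := ℝ) (φ := fun _ : Fin 3 => ℝ) i).hasFDerivAt
    (x := u p)).comp p hu.hasFDerivAt
  rw [show (fun q => u q i) = (⇑(ContinuousLinearMap.proj (R := ℝ)
    (φ := fun _ : Fin 3 => ℝ) i) ∘ u) from rfl, h.fderiv]
  simp

lemma lipschitz_sections {u : P3 → E3} (hu : ContDiff ℝ 1 u) {CD : ℝ}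
    (hCD : ∀ (p : P3) (i j : Fin 3), |pdx j (fun q => u q i) p| ≤ CD) (t : ℝ) :
    LipschitzWith (Real.toNNReal (3 * CD)) (fun y => u (t, y)) := by
  have hCD0 : 0 ≤ CD := (abs_nonneg _).trans (hCD (0, 0) 0 0)
  have hud := hu.differentiable one_ne_zero
  apply lipschitzWith_of_nnnorm_fderiv_le (𝕜 := ℝ)
  · exact fun y => (hud (t, y)).comp y ((differentiableAt_const t).prodMk differentiableAt_id)
  intro y
  have hline : HasFDerivAt (fun y : E3 => ((t : ℝ), y))
      (((0 : E3 →L[ℝ] ℝ)).prod (ContinuousLinearMap.id ℝ E3)) y :=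
    (hasFDerivAt_const t y).prodMk (hasFDerivAt_id y)
  have hD := (hud (t, y)).hasFDerivAt.comp y hline
  rw [show (fun y : E3 => u (t, y)) = (u ∘ Prod.mk t) from rfl, hD.fderiv]
  rw [← NNReal.coe_le_coe, coe_nnnorm, Real.coe_toNNReal _ (by positivity)]
  apply ContinuousLinearMap.opNorm_le_bound _ (by positivity)
  intro w
  rw [pi_norm_le_iff_of_nonneg (by positivity)]
  intro i
  have happ : (fderiv ℝ u (t, y)) ((0 : E3 →L[ℝ] ℝ).prod (ContinuousLinearMap.id ℝ E3) w) i
      = fderiv ℝ (fun q => u q i) (t, y) ((0 : ℝ), w) := by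
    rw [fderiv_pi_apply (hud (t, y)) i]
    rfl
  rw [ContinuousLinearMap.comp_apply, happ]
  have hdec : ((0 : ℝ), w) = ∑ j : Fin 3, w j • ((0 : ℝ), (Pi.single j 1 : E3)) := by
    refine Prod.ext ?_ ?_
    · simp [Prod.fst_sum]
    · rw [Prod.snd_sum]; simpa using pi3_decomp w
  rw [hdec, map_sum]
  refine (norm_sum_le _ _).trans ?_
  have hterm : ∀ j : Fin 3, ‖fderiv ℝ (fun q => u q i) (t, y) (w j • ((0:ℝ), (Pi.single j 1 : E3)))‖
      ≤ CD * ‖w‖ := by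
    intro j
    rw [map_smul]
    have h1 : ‖fderiv ℝ (fun q => u q i) (t, y) ((0:ℝ), (Pi.single j 1 : E3))‖ ≤ CD := by
      rw [Real.norm_eq_abs]; exact hCD (t, y) i j
    have h2 : |w j| ≤ ‖w‖ := by
      rw [← Real.norm_eq_abs]; exact norm_le_pi_norm w j
    calc ‖w j • fderiv ℝ (fun q => u q i) (t, y) ((0:ℝ), (Pi.single j 1 : E3))‖
        = |w j| * ‖fderiv ℝ (fun q => u q i) (t, y) ((0:ℝ), (Pi.single j 1 : E3))‖ := by
          rw [norm_smul, Real.norm_eq_abs]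
      _ ≤ ‖w‖ * CD := by
          exact mul_le_mul h2 h1 (norm_nonneg _) (norm_nonneg _)
      _ = CD * ‖w‖ := mul_comm _ _
  calc ∑ j : Fin 3, ‖fderiv ℝ (fun q => u q i) (t, y) (w j • ((0:ℝ), (Pi.single j 1 : E3)))‖
      ≤ ∑ _j : Fin 3, CD * ‖w‖ := Finset.sum_le_sum fun j _ => hterm j
    _ = 3 * (CD * ‖w‖) := by simp [Finset.sum_const]
    _ = 3 * CD * ‖w‖ := by ring

lemma key_identity {ρ : P3 → ℝ} {u : P3 → E3} (hu : ContDiff ℝ 1 u) (hρ : ContDiff ℝ 2 ρ)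
    (htransport : ∀ p : P3, pt ρ p + ∑ i : Fin 3, u p i * pdx i ρ p = 0)
    {p : P3} (h2 : u p 2 = 0) (h20 : pdx 2 (fun q => u q 0) p = 0)
    (h21 : pdx 2 (fun q => u q 1) p = 0) :
    fderiv ℝ (fderiv ℝ ρ) p ((0:ℝ), (Pi.single 2 1 : E3)) (1, u p)
      = -(pdx 2 (fun q => u q 2) p) * pdx 2 ρ p := by
  set w₂ : P3 := ((0:ℝ), (Pi.single 2 1 : E3)) with hw₂
  set B := fderiv ℝ (fderiv ℝ ρ) p with hB
  have hud := hu.differentiable one_ne_zero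
  -- differentiate the transport equation in direction w₂
  have hpt : HasDerivAt (fun s : ℝ => pt ρ (p + s • w₂)) (B w₂ ((1:ℝ), (0:E3))) 0 := by
    have := dirDeriv (f := fun q => fderiv ℝ ρ q ((1:ℝ), (0:E3)))
      (differentiable_fderiv_apply hρ _ p) w₂
    rwa [fderiv_fderiv_apply hρ p _ w₂] at this
  have hterm : ∀ i : Fin 3, HasDerivAt (fun s : ℝ => u (p + s • w₂) i * pdx i ρ (p + s • w₂))
      (pdx 2 (fun q => u q i) p * pdx i ρ p + u p i * (B w₂ ((0:ℝ), (Pi.single i 1 : E3)))) 0 := by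
    intro i
    have hu1 : HasDerivAt (fun s : ℝ => u (p + s • w₂) i)
        (pdx 2 (fun q => u q i) p) 0 := by
      have hdiff : DifferentiableAt ℝ (fun q => u q i) p :=
        ((ContinuousLinearMap.proj (R := ℝ) (φ := fun _ : Fin 3 => ℝ)
          i).differentiableAt).comp p (hud p)
      exact dirDeriv hdiff w₂
    have hρ1 : HasDerivAt (fun s : ℝ => pdx i ρ (p + s • w₂))
        (B w₂ ((0:ℝ), (Pi.single i 1 : E3))) 0 := by
      have := dirDeriv (f := fun q => fderiv ℝ ρ q ((0:ℝ), (Pi.single i 1 : E3)))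
        (differentiable_fderiv_apply hρ _ p) w₂
      rwa [fderiv_fderiv_apply hρ p _ w₂] at this
    simpa using hu1.fun_mul hρ1
  have hsum : HasDerivAt (fun s : ℝ => pt ρ (p + s • w₂)
      + ∑ i : Fin 3, u (p + s • w₂) i * pdx i ρ (p + s • w₂))
      (B w₂ ((1:ℝ), (0:E3)) + ∑ i : Fin 3, (pdx 2 (fun q => u q i) p * pdx i ρ p
        + u p i * (B w₂ ((0:ℝ), (Pi.single i 1 : E3))))) 0 :=
    hpt.add (HasDerivAt.fun_sum fun i _ => hterm i)
  have hzero : (fun s : ℝ => pt ρ (p + s • w₂)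
      + ∑ i : Fin 3, u (p + s • w₂) i * pdx i ρ (p + s • w₂)) = fun _ => (0:ℝ) := by
    funext s; exact htransport _
  have hD0 : B w₂ ((1:ℝ), (0:E3)) + ∑ i : Fin 3, (pdx 2 (fun q => u q i) p * pdx i ρ p
      + u p i * (B w₂ ((0:ℝ), (Pi.single i 1 : E3)))) = 0 := by
    have h0 : HasDerivAt (fun s : ℝ => pt ρ (p + s • w₂)
        + ∑ i : Fin 3, u (p + s • w₂) i * pdx i ρ (p + s • w₂)) 0 0 := by
      rw [hzero]; exact hasDerivAt_const 0 0
    exact hsum.unique h0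
  -- decompose (1, u p)
  have hdec : ((1:ℝ), u p) = ((1:ℝ), (0:E3)) + u p 0 • ((0:ℝ), (Pi.single 0 1 : E3))
      + u p 1 • ((0:ℝ), (Pi.single 1 1 : E3)) + u p 2 • ((0:ℝ), (Pi.single 2 1 : E3)) := by
    refine Prod.ext (by simp) ?_
    have := pi3_decomp (u p)
    rw [Fin.sum_univ_three] at this
    simpa using this
  rw [hdec, map_add, map_add, map_add, map_smul, map_smul, map_smul]
  rw [Fin.sum_univ_three, h20, h21, h2] at hD0
  simp only [smul_eq_mul, h2]
  ring_nf
  ring_nf at hD0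
  linarith [hD0]


/-- Proposition 2.1 (flat-boundary form): if `u` satisfies the slip boundary
conditions `u₃ = 0`, `∂₃u₁ = ∂₃u₂ = 0` on `{x₃ = 0}` and `ρ` solves the
transport equation `∂ₜρ + u·∇ρ = 0`, then the compatibility condition
`∂₃ρ = 0` on the flat boundary is propagated from `t = 0` to all `t ≥ 0`. -/
theorem normal_derivative_density_preserved
    (ρ : ℝ × (Fin 3 → ℝ) → ℝ) (u : ℝ × (Fin 3 → ℝ) → Fin 3 → ℝ)
    (hu : ContDiff ℝ 1 u)
    (hubdd : ∃ C : ℝ, ∀ (p : ℝ × (Fin 3 → ℝ)) (i : Fin 3), |u p i| ≤ C)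
    (hDubdd : ∃ C : ℝ, ∀ (p : ℝ × (Fin 3 → ℝ)) (i j : Fin 3),
      |pdx j (fun q => u q i) p| ≤ C)
    (hρ : ContDiff ℝ 2 ρ)
    (hDρbdd : ∃ C : ℝ, ∀ p : ℝ × (Fin 3 → ℝ),
      ‖fderiv ℝ ρ p‖ ≤ C ∧ ‖fderiv ℝ (fderiv ℝ ρ) p‖ ≤ C)
    (hslip : ∀ (t : ℝ), 0 ≤ t → ∀ x : Fin 3 → ℝ, x 2 = 0 →
      u (t, x) 2 = 0 ∧ pdx 2 (fun q => u q 0) (t, x) = 0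
        ∧ pdx 2 (fun q => u q 1) (t, x) = 0)
    (htransport : ∀ p : ℝ × (Fin 3 → ℝ),
      pt ρ p + ∑ i : Fin 3, u p i * pdx i ρ p = 0)
    (hinit : ∀ x : Fin 3 → ℝ, x 2 = 0 → pdx 2 ρ (0, x) = 0) :
    ∀ (t : ℝ), 0 ≤ t → ∀ x : Fin 3 → ℝ, x 2 = 0 → pdx 2 ρ (t, x) = 0 := by
  intro T hT x hx
  obtain ⟨Cu, hCu⟩ := hubdd
  obtain ⟨CD, hCD⟩ := hDubdd
  have hCu0 : 0 ≤ Cu := (abs_nonneg _).trans (hCu (0, 0) 0)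
  have hCD0 : 0 ≤ CD := (abs_nonneg _).trans (hCD (0, 0) 0 0)
  -- the truncated vector field
  set v : ℝ → E3 → E3 := fun t y i => if i = 2 then (0:ℝ) else u (t, y) i with hv
  -- Picard–Lindelöf
  have hpl : IsPicardLindelof v (tmin := 0) (tmax := T) ⟨T, hT, le_rfl⟩ x
      (Real.toNNReal (Cu * T)) 0 (Real.toNNReal Cu) (Real.toNNReal (3 * CD)) := by
    refine ⟨?_, ?_, ?_, ?_⟩
    · intro t _
      refine LipschitzWith.lipschitzOnWith ?_
      have hL := lipschitz_sections hu hCD t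
      refine LipschitzWith.of_dist_le_mul fun y y' => ?_
      rw [dist_pi_le_iff (by positivity)]
      intro i
      by_cases hi : i = 2
      · simp [hv, hi, dist_self]
        positivity
      · have h1 : dist (v t y i) (v t y' i) = dist (u (t, y) i) (u (t, y') i) := by
          simp [hv, hi]
        rw [h1]
        exact (dist_le_pi_dist (u (t, y)) (u (t, y')) i).trans (hL.dist_le_mul y y')
    · intro y _
      refine Continuous.continuousOn ?_
      refine continuous_pi fun i => ?_
      by_cases hi : i = 2
      · simp only [hv, hi, if_pos]
        exact continuous_const
      · simp only [hv, if_neg hi]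
        exact (continuous_apply i).comp (hu.continuous.comp (continuous_id.prodMk
          continuous_const))
    · intro t _ y _
      rw [Real.coe_toNNReal _ hCu0]
      rw [pi_norm_le_iff_of_nonneg hCu0]
      intro i
      by_cases hi : i = 2
      · simp [hv, hi, hCu0]
      · simp only [hv, if_neg hi, Real.norm_eq_abs]
        exact hCu (t, y) i
    · norm_num [Real.coe_toNNReal _ hCu0, Real.coe_toNNReal _ (mul_nonneg hCu0 hT), max_eq_right hT]
  obtain ⟨γ, hγT, hγ'⟩ : ∃ γ : ℝ → E3, γ T = x ∧
      ∀ t ∈ Set.Icc 0 T, HasDerivWithinAt γ (v t (γ t)) (Set.Icc 0 T) t :=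
    hpl.exists_eq_forall_mem_Icc_hasDerivWithinAt₀
  -- γ stays on the boundary plane
  have hγcont : ContinuousOn γ (Set.Icc 0 T) := fun t ht => (hγ' t ht).continuousWithinAt
  have hγ2const : ∀ t ∈ Set.Icc 0 T, γ t 2 = γ 0 2 := by
    refine constant_of_has_deriv_right_zero ((continuous_apply 2).comp_continuousOn hγcont) ?_
    intro s hs
    have h1 : HasDerivWithinAt γ (v s (γ s)) (Set.Ici s) s :=
      (hγ' s (Set.Ico_subset_Icc_self hs)).mono_of_mem_nhdsWithin
        (Icc_mem_nhdsGE_of_mem hs)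
    have h2 := (ContinuousLinearMap.proj (R := ℝ) (φ := fun _ : Fin 3 => ℝ)
      2).hasFDerivAt.comp_hasDerivWithinAt s h1
    simpa [hv, Function.comp_def] using h2
  have hγ2 : ∀ t ∈ Set.Icc 0 T, γ t 2 = 0 := by
    have h0 : γ 0 2 = 0 := by
      have := hγ2const T ⟨hT, le_rfl⟩
      rw [hγT, hx] at this
      exact this.symm
    intro t ht; rw [hγ2const t ht, h0]
  -- on the boundary the truncated field equals u
  have hvu : ∀ t ∈ Set.Icc 0 T, v t (γ t) = u (t, γ t) := by
    intro t ht
    funext i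
    by_cases hi : i = 2
    · rw [hi]
      simp only [hv, if_pos]
      exact ((hslip t ht.1 (γ t) (hγ2 t ht)).1).symm
    · simp [hv, hi]
  -- the normal derivative along the flow
  set g : P3 → ℝ := fun q => fderiv ℝ ρ q ((0:ℝ), (Pi.single 2 1 : E3)) with hg
  set h : ℝ → ℝ := fun t => g (t, γ t) with hh
  set φ : ℝ → ℝ := fun t => -(pdx 2 (fun q => u q 2) (t, γ t)) with hφ
  have hkey : ∀ t ∈ Set.Icc 0 T, HasDerivWithinAt h (φ t * h t) (Set.Icc 0 T) t := by
    intro t ht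
    set p : P3 := (t, γ t) with hp
    have hΓ : HasDerivWithinAt (fun s : ℝ => ((s : ℝ), γ s)) ((1:ℝ), v t (γ t))
        (Set.Icc 0 T) t := (hasDerivWithinAt_id t _).prodMk (hγ' t ht)
    have hBdiff : DifferentiableAt ℝ (fderiv ℝ ρ) p :=
      (hρ.fderiv_right (m := 1) (by norm_num)).differentiable one_ne_zero p
    have hgF := hBdiff.hasFDerivAt.clm_apply
      (hasFDerivAt_const ((0:ℝ), (Pi.single 2 1 : E3)) p)
    have hcomp := hgF.comp_hasDerivWithinAt t hΓ
    have hval : ((fderiv ℝ ρ p).comp (0 : P3 →L[ℝ] P3)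
        + (fderiv ℝ (fderiv ℝ ρ) p).flip ((0:ℝ), (Pi.single 2 1 : E3))) ((1:ℝ), v t (γ t))
        = φ t * h t := by
      have e1 : ((fderiv ℝ ρ p).comp (0 : P3 →L[ℝ] P3)
          + (fderiv ℝ (fderiv ℝ ρ) p).flip ((0:ℝ), (Pi.single 2 1 : E3))) ((1:ℝ), v t (γ t))
          = fderiv ℝ (fderiv ℝ ρ) p ((1:ℝ), v t (γ t)) ((0:ℝ), (Pi.single 2 1 : E3)) := by
        simp
      rw [e1, hvu t ht, sndDeriv_symm hρ p _ _]
      have hsl := hslip t ht.1 (γ t) (hγ2 t ht)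
      rw [key_identity hu hρ htransport hsl.1 hsl.2.1 hsl.2.2]
      rfl
    rw [hval] at hcomp
    exact hcomp
  -- Grönwall
  have hhcont : ContinuousOn h (Set.Icc 0 T) := fun t ht => (hkey t ht).continuousWithinAt
  have hder' : ∀ t ∈ Set.Ico 0 T, HasDerivWithinAt h (φ t * h t) (Set.Ici t) t := by
    intro t ht
    exact (hkey t (Set.Ico_subset_Icc_self ht)).mono_of_mem_nhdsWithin
      (Icc_mem_nhdsGE_of_mem ht)
  have h0 : ‖h 0‖ ≤ 0 := by
    have := hinit (γ 0) (hγ2 0 ⟨le_rfl, hT⟩)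
    have hh0 : h 0 = 0 := this
    rw [hh0, norm_zero]
  have hbound : ∀ t ∈ Set.Ico 0 T, ‖φ t * h t‖ ≤ CD * ‖h t‖ + 0 := by
    intro t _
    rw [add_zero, Real.norm_eq_abs, Real.norm_eq_abs, abs_mul]
    refine mul_le_mul_of_nonneg_right ?_ (abs_nonneg _)
    rw [hφ, abs_neg]
    exact hCD (t, γ t) 2 2
  have hG := norm_le_gronwallBound_of_norm_deriv_right_le hhcont hder' h0 hbound T ⟨hT, le_rfl⟩
  rw [gronwallBound_ε0_δ0] at hG
  have hT0 : h T = 0 := by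
    have := norm_nonneg (h T)
    have : ‖h T‖ = 0 := le_antisymm hG this
    rwa [norm_eq_zero] at this
  have : h T = pdx 2 ρ (T, x) := by
    show g (T, γ T) = pdx 2 ρ (T, x)
    rw [hγT]
    rfl
  rw [← this, hT0]
end
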